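/- A lattice L with unary operation ' is dually weakly orthomodular if and only if for every x ∈ L that is not the greatest element of L, there exists a map s : L → [0,1] such that s(b ∧ (a ∨ b')) = s(a) for all a ≤ b in L, and s⁻¹({0}) = (x], the principal ideal generated by x. -/
import Mathlib


/-- A lattice with a unary operation is dually weakly orthomodular iff for every x which is not
the greatest element there exists s : L → [0,1] with s(b ⊓ (a ⊔ b')) = s(a) for a ≤ b and
s⁻¹({0}) = (x]. -/
theorem stmt_16 {L : Type*} [Lattice L] (f : L → L) :
    (∀ x y : L, (x ⊔ y) ⊓ (x ⊔ f (x ⊔ y)) = x) ↔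
      (∀ x : L, ¬(∀ y : L, y ≤ x) →
        ∃ s : L → ℝ, (∀ y : L, s y ∈ Set.Icc (0 : ℝ) 1) ∧
          (∀ a b : L, a ≤ b → s (b ⊓ (a ⊔ f b)) = s a) ∧
          (∀ y : L, s y = 0 ↔ y ≤ x)) := by
  classical
  constructor
  · intro h x _
    refine ⟨fun y => if y ≤ x then 0 else 1, ?_, ?_, ?_⟩
    · intro y
      by_cases hy : y ≤ x <;> simp [hy]
    · intro a b hab
      have key : b ⊓ (a ⊔ f b) = a := by
        have := h a b
        rwa [sup_eq_right.mpr hab] at this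
      rw [key]
    · intro y
      by_cases hy : y ≤ x <;> simp [hy]
  · intro h x y
    refine le_antisymm ?_ (le_inf le_sup_left le_sup_left)
    by_cases hx : ∀ z : L, z ≤ x
    · exact hx _
    · obtain ⟨s, _, hs, hz⟩ := h x hx
      have := hs x (x ⊔ y) le_sup_left
      exact (hz _).mp (this.trans ((hz x).mpr le_rfl))
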